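/- Let m ≥ n, let A ∈ ℝ^{m×n} have full column rank n, let W ∈ ℝ^{n×n} be symmetric positive definite, let w ∈ ℝ^n and set b = A w. Given x₀ ∈ ℝ^n, suppose for k = 1,…,n there are sketching matrices S_k ∈ ℝ^{m×k} such that each k×k matrix S_kᵀ A W Aᵀ S_k is invertible, and the iterates are defined by x_k = x_{k−1} + W Aᵀ S_k (S_kᵀ A W Aᵀ S_k)⁻¹ S_kᵀ (b − A x_{k−1}). If S_n ∈ ℝ^{m×n} has full column rank n and every column of S_n lies in the column space of A, then x_n = w; in particular A x_n = b. -/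
import Mathlib


open Matrix

/-- Finite termination of the projection iteration when `m ≥ n`, `A` has full
column rank, and the final sketch `S n` has full column rank with columns in the
range of `A`: the `n`-th iterate solves `A x = b` exactly (`x n = w`). -/
theorem stmt0 (m n : ℕ) (hmn : n ≤ m)
    (A : Matrix (Fin m) (Fin n) ℝ)
    (hA : LinearIndependent ℝ (fun j i => A i j))
    (W : Matrix (Fin n) (Fin n) ℝ) (hW : W.PosDef)
    (w : Fin n → ℝ) (b : Fin m → ℝ) (hb : b = A.mulVec w)
    (x : ℕ → Fin n → ℝ)
    (S : (k : ℕ) → Matrix (Fin m) (Fin k) ℝ)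
    (hinv : ∀ k, 1 ≤ k → k ≤ n → IsUnit ((S k)ᵀ * A * W * Aᵀ * S k))
    (hx : ∀ k, 1 ≤ k → k ≤ n →
      x k = x (k - 1) +
        (W * Aᵀ * S k).mulVec
          (((S k)ᵀ * A * W * Aᵀ * S k)⁻¹.mulVec
            ((S k)ᵀ.mulVec (b - A.mulVec (x (k - 1))))))
    (hSn : LinearIndependent ℝ (fun j i => S n i j))
    (hrange : ∀ j : Fin n, ∃ u : Fin n → ℝ, A.mulVec u = fun i => S n i j) :
    x n = w ∧ A.mulVec (x n) = b := by
  -- `A.mulVec` is injective since columns of `A` are linearly independent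
  have hAinj : ∀ v : Fin n → ℝ, A.mulVec v = 0 → v = 0 := by
    intro v hv
    have := Fintype.linearIndependent_iff.mp hA v ?_
    · funext j; exact this j
    · funext i
      have := congrFun hv i
      simpa [Matrix.mulVec, dotProduct, mul_comm] using this
  rcases Nat.eq_zero_or_pos n with hn | hn
  · subst hn
    have hxw : x 0 = w := Subsingleton.elim _ _
    exact ⟨hxw, by rw [hxw, hb]⟩
  -- main case
  set M := (S n)ᵀ * A * W * Aᵀ * S n with hM
  have hMu : IsUnit M := hinv n hn le_rfl
  have hMdet : IsUnit M.det := (Matrix.isUnit_iff_isUnit_det M).mp hMu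
  set r := b - A.mulVec (x (n - 1)) with hr
  -- residual after step n is orthogonal to columns of `S n`
  have horth : (S n)ᵀ.mulVec (b - A.mulVec (x n)) = 0 := by
    rw [hx n hn le_rfl]
    have h1 : A.mulVec (x (n-1) + (W * Aᵀ * S n).mulVec (M⁻¹.mulVec ((S n)ᵀ.mulVec r)))
        = A.mulVec (x (n-1)) + (A * (W * Aᵀ * S n)).mulVec (M⁻¹.mulVec ((S n)ᵀ.mulVec r)) := by
      rw [Matrix.mulVec_add, Matrix.mulVec_mulVec]
    rw [← hM, ← hr, h1]
    have h2 : b - (A.mulVec (x (n-1)) + (A * (W * Aᵀ * S n)).mulVec (M⁻¹.mulVec ((S n)ᵀ.mulVec r)))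
        = r - (A * (W * Aᵀ * S n)).mulVec (M⁻¹.mulVec ((S n)ᵀ.mulVec r)) := by
      rw [hr]; abel
    have h3 : (S n)ᵀ * (A * (W * Aᵀ * S n)) = M := by
      rw [hM]; simp only [Matrix.mul_assoc]
    rw [h2, Matrix.mulVec_sub, Matrix.mulVec_mulVec, Matrix.mulVec_mulVec, h3,
      Matrix.mulVec_mulVec, Matrix.mul_nonsing_inv _ hMdet, Matrix.one_mul, sub_self]
  -- write `S n = A * U`
  have hU : ∃ U : Matrix (Fin n) (Fin n) ℝ, A * U = S n := by
    refine ⟨Matrix.of fun i j => Classical.choose (hrange j) i, ?_⟩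
    ext i j
    have := congrFun (Classical.choose_spec (hrange j)) i
    simpa [Matrix.mul_apply, Matrix.mulVec, dotProduct] using this
  obtain ⟨U, hAU⟩ := hU
  -- `U` is invertible
  have hUu : IsUnit U := by
    rw [← Matrix.mulVec_injective_iff_isUnit]
    have : Function.Injective (S n).mulVec := by
      intro c d hcd
      have h := sub_eq_zero.mpr hcd
      rw [← Matrix.mulVec_sub] at h
      have hz : c - d = 0 := by
        have := Fintype.linearIndependent_iff.mp hSn (c - d) ?_
        · funext j; exact this j
        · funext i
          have := congrFun h i
          simpa [Matrix.mulVec, dotProduct, mul_comm] using this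
      exact sub_eq_zero.mp hz
    intro c d hcd
    apply this
    rw [← hAU, ← Matrix.mulVec_mulVec, ← Matrix.mulVec_mulVec, hcd]
  set v := w - x n with hv
  have hrv : b - A.mulVec (x n) = A.mulVec v := by
    rw [hb, hv, Matrix.mulVec_sub]
  -- from orthogonality: `Aᵀ * A * v = 0`
  have hAAv : Aᵀ.mulVec (A.mulVec v) = 0 := by
    have h1 : Uᵀ.mulVec (Aᵀ.mulVec (A.mulVec v)) = 0 := by
      have : (S n)ᵀ = Uᵀ * Aᵀ := by rw [← hAU, Matrix.transpose_mul]
      rw [Matrix.mulVec_mulVec, ← this, ← hrv, horth]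
    have hUt : IsUnit Uᵀ := (Matrix.isUnit_transpose U).mpr hUu
    have := congrArg (Uᵀ)⁻¹.mulVec h1
    rwa [Matrix.mulVec_mulVec, Matrix.nonsing_inv_mul _ ((Matrix.isUnit_iff_isUnit_det _).mp hUt),
      Matrix.one_mulVec, Matrix.mulVec_zero] at this
  -- hence `A v = 0`
  have hAv : A.mulVec v = 0 := by
    have h0 : A.mulVec v ⬝ᵥ A.mulVec v = 0 := by
      have : v ⬝ᵥ Aᵀ.mulVec (A.mulVec v) = 0 := by rw [hAAv]; simp
      rwa [Matrix.dotProduct_mulVec, Matrix.vecMul_transpose] at this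
    exact dotProduct_self_eq_zero.mp h0
  have hv0 : v = 0 := hAinj v hAv
  have hxw : x n = w := by
    have := sub_eq_zero.mp (hv ▸ hv0 : w - x n = 0)
    exact this.symm
  exact ⟨hxw, by rw [hxw, hb]⟩
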